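/- For every rooted plane tree T, the ternary pit-climbing code TPC(T) never contains two consecutive occurrences of the symbol ↓, and TPC(T) does not begin with the symbol ↓. -/

import Mathlib

/-- A rooted plane tree: a root node together with a finite ordered list of
subtrees, the subtrees rooted at the children of the root. -/
inductive PTree : Type
  | node : List PTree → PTree

namespace PTree

/-- The subtrees rooted at the children of the root. -/
def children : PTree → List PTree
  | node ts => ts

mutual
/-- Number of nodes of a rooted plane tree. -/
def numNodes : PTree → ℕ
  | node ts => 1 + numNodesList ts
def numNodesList : List PTree → ℕ
  | [] => 0
  | t :: ts => numNodes t + numNodesList ts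
end

mutual
/-- Number of leaves (nodes with no children); a single-node tree has one leaf. -/
def numLeaves : PTree → ℕ
  | node [] => 1
  | node (t :: ts) => numLeaves t + numLeavesList ts
def numLeavesList : List PTree → ℕ
  | [] => 0
  | t :: ts => numLeaves t + numLeavesList ts
end

/-- Symbols of the ternary pit-climbing code: ↓, ↑, ⇑. -/
inductive PCSym : Type
  | down   -- ↓ : fall to the leftmost unexplored leaf
  | up     -- ↑ : climb to a never-before-visited node
  | upSeen -- ⇑ : climb to an already-visited node
deriving DecidableEq

mutual
/-- Ternary pit-climbing code TPC: empty for a single node; `TPC t ++ [↑]` for a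
single child subtree `t`; `TPC t₁ ++ [↑,↓] ++ TPC t₂ ++ [⇑,↓] ++ ⋯ ++ [⇑,↓] ++ TPC tₖ ++ [⇑]`
for children subtrees `t₁, …, tₖ`, `k ≥ 2`. -/
def TPC : PTree → List PCSym
  | node [] => []
  | node [t] => TPC t ++ [.up]
  | node (t₁ :: t₂ :: ts) => TPC t₁ ++ [.up, .down] ++ TPCRest (t₂ :: ts)
/-- TPC contribution of the second-onwards children subtrees. -/
def TPCRest : List PTree → List PCSym
  | [] => []
  | [t] => TPC t ++ [.upSeen]
  | t :: ts => TPC t ++ [.upSeen, .down] ++ TPCRest ts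
end

/-- Binary encoding of the pit-climbing symbols: ↓ ↦ 0, ⇑ ↦ 00, ↑ ↦ 1. -/
def pcBits : PCSym → List Bool
  | .down => [false]
  | .upSeen => [false, false]
  | .up => [true]

/-- Binary pit-climbing code PC. -/
def PC (T : PTree) : List Bool := (TPC T).flatMap pcBits

lemma numNodesList_append (a b : List PTree) :
    numNodesList (a ++ b) = numNodesList a + numNodesList b := by
  induction a with
  | nil => simp [numNodesList]
  | cons t ts ih => simp [numNodesList, ih]; ring

lemma numNodesList_children_flatten (l : List PTree) :
    numNodesList ((l.map children).flatten) + l.length = numNodesList l := by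
  induction l with
  | nil => simp [numNodesList]
  | cons t ts ih =>
      cases t with
      | node cs =>
        simp only [List.map_cons, List.flatten_cons, numNodesList_append,
          List.length_cons, numNodesList, children, numNodes]
        omega

/-- Breadth-first list of the sibling groups of a tree, starting from the list
`gs` of sibling groups at the current level: the groups of the current level
followed by the groups of children on the levels below, level by level and
left to right within each level. -/
def bfsGroups (gs : List (List PTree)) : List (List PTree) :=
  if h : gs.flatten.isEmpty then []
  else gs ++ bfsGroups (gs.flatten.map children)
termination_by numNodesList gs.flatten
decreasing_by
  have h1 := numNodesList_children_flatten gs.flatten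
  have h2 : gs.flatten.length ≠ 0 := by
    intro hh
    rw [List.length_eq_zero_iff] at hh
    exact h (List.isEmpty_iff.mpr hh)
  omega

/-- Symbols of the ternary tunnel-digging code: ←, →, ⇒. -/
inductive TDSym : Type
  | leaf   -- ← : a leaf node
  | inner  -- → : a node with at least one child
  | tunnel -- ⇒ : transition between consecutive non-sibling nodes
deriving DecidableEq

/-- The symbols written for one sibling group: ← for each leaf, → for each
node with at least one child. -/
def groupSyms (g : List PTree) : List TDSym :=
  g.map (fun t => if t.children.isEmpty then .leaf else .inner)

/-- Ternary tunnel-digging code TTD: the non-root nodes in breadth-first order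
(by increasing depth, left to right within each depth), ← for each leaf and →
for each internal node, with ⇒ inserted between every two consecutive
non-sibling nodes. -/
def TTD (T : PTree) : List TDSym :=
  List.intercalate [TDSym.tunnel]
    (((bfsGroups [T.children]).filter (fun g => ¬ g.isEmpty)).map groupSyms)

/-- Binary encoding of the tunnel-digging symbols: ⇒ ↦ 0, → ↦ 00, ← ↦ 1. -/
def tdBits : TDSym → List Bool
  | .tunnel => [false]
  | .inner => [false, false]
  | .leaf => [true]

/-- Binary tunnel-digging code TD. -/
def TD (T : PTree) : List Bool := (TTD T).flatMap tdBits

/-- TreeExplorer code TE: `0·PC(T)` if `l(T) < n(T)/2`, and `1·TD(T)` otherwise. -/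
def TE (T : PTree) : List Bool :=
  if 2 * numLeaves T < numNodes T then false :: PC T else true :: TD T

/-- The "no two consecutive downs" relation. -/
def RNoDD (a b : PCSym) : Prop := a ≠ .down ∨ b ≠ .down

lemma rnodd_of_ne_left {a b : PCSym} (h : a ≠ .down) : RNoDD a b := Or.inl h

lemma rnodd_of_ne_right {a b : PCSym} (h : b ≠ .down) : RNoDD a b := Or.inr h

lemma numNodes_pos (t : PTree) : 1 ≤ numNodes t := by
  cases t with
  | node ts => simp [numNodes]

lemma chain_cons_append_single {l : List PCSym} (s : PCSym) (hs : s ≠ .down)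
    (h : List.Chain' RNoDD (PCSym.down :: l)) :
    List.Chain' RNoDD ((PCSym.down :: l) ++ [s]) := by
  rw [List.Chain', List.isChain_append]
  refine ⟨h, List.isChain_singleton _, ?_⟩
  intro x _ y hy
  simp at hy
  subst hy
  exact Or.inr hs

lemma tpc_chain_aux : ∀ n : ℕ,
    (∀ t : PTree, 2 * numNodes t ≤ n →
      List.Chain' RNoDD (PCSym.down :: TPC t)) ∧
    (∀ ts : List PTree, ts ≠ [] → 2 * numNodesList ts + 1 ≤ n →
      List.Chain' RNoDD (PCSym.down :: TPCRest ts)) := by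
  intro n
  induction n using Nat.strong_induction_on with
  | _ n ih =>
    constructor
    · intro t ht
      match t with
      | node [] => simp [TPC, List.Chain']
      | node [t1] =>
        have hm : 2 * numNodes t1 < n := by
          simp [numNodes, numNodesList] at ht; omega
        have h1 := (ih _ hm).1 t1 le_rfl
        show List.Chain' RNoDD (PCSym.down :: (TPC t1 ++ [PCSym.up]))
        rw [show PCSym.down :: (TPC t1 ++ [PCSym.up]) =
          (PCSym.down :: TPC t1) ++ [PCSym.up] by simp]
        exact chain_cons_append_single _ (by simp) h1
      | node (t1 :: t2 :: ts) =>
        have hp2 := numNodes_pos t2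
        have hp1 := numNodes_pos t1
        have hlt1 : 2 * numNodes t1 < n := by
          simp [numNodes, numNodesList] at ht; omega
        have hlt2 : 2 * numNodesList (t2 :: ts) + 1 < n := by
          simp [numNodes, numNodesList] at ht ⊢; omega
        have h1 := (ih _ hlt1).1 t1 le_rfl
        have h2 := (ih _ hlt2).2 (t2 :: ts) (by simp) le_rfl
        show List.Chain' RNoDD
          (PCSym.down :: (TPC t1 ++ [PCSym.up, PCSym.down] ++ TPCRest (t2 :: ts)))
        rw [show PCSym.down :: (TPC t1 ++ [PCSym.up, PCSym.down] ++ TPCRest (t2 :: ts)) =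
          ((PCSym.down :: TPC t1) ++ [PCSym.up]) ++ (PCSym.down :: TPCRest (t2 :: ts)) by simp]
        rw [List.Chain', List.isChain_append]
        refine ⟨chain_cons_append_single _ (by simp) h1, h2, ?_⟩
        intro x hx y hy
        rw [List.getLast?_concat, Option.mem_def, Option.some.injEq] at hx
        subst hx
        exact Or.inl (by simp)
    · intro ts hne hts
      match ts with
      | [t1] =>
        have hm : 2 * numNodes t1 < n := by
          simp [numNodesList] at hts; omega
        have h1 := (ih _ hm).1 t1 le_rfl
        show List.Chain' RNoDD (PCSym.down :: (TPC t1 ++ [PCSym.upSeen]))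
        rw [show PCSym.down :: (TPC t1 ++ [PCSym.upSeen]) =
          (PCSym.down :: TPC t1) ++ [PCSym.upSeen] by simp]
        exact chain_cons_append_single _ (by simp) h1
      | t1 :: t2 :: rest =>
        have hp1 := numNodes_pos t1
        have hm1 : 2 * numNodes t1 < n := by
          simp [numNodesList] at hts; omega
        have hm2 : 2 * numNodesList (t2 :: rest) + 1 < n := by
          simp [numNodesList] at hts ⊢; omega
        have h1 := (ih _ hm1).1 t1 le_rfl
        have h2 := (ih _ hm2).2 (t2 :: rest) (by simp) le_rfl
        show List.Chain' RNoDD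
          (PCSym.down :: (TPC t1 ++ [PCSym.upSeen, PCSym.down] ++ TPCRest (t2 :: rest)))
        rw [show PCSym.down :: (TPC t1 ++ [PCSym.upSeen, PCSym.down] ++ TPCRest (t2 :: rest)) =
          ((PCSym.down :: TPC t1) ++ [PCSym.upSeen]) ++ (PCSym.down :: TPCRest (t2 :: rest)) by simp]
        rw [List.Chain', List.isChain_append]
        refine ⟨chain_cons_append_single _ (by simp) h1, h2, ?_⟩
        intro x hx y hy
        rw [List.getLast?_concat, Option.mem_def, Option.some.injEq] at hx
        subst hx
        exact Or.inl (by simp)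

lemma tpc_chain (t : PTree) : List.Chain' RNoDD (PCSym.down :: TPC t) :=
  (tpc_chain_aux (2 * numNodes t)).1 t le_rfl

end PTree

open PTree in
/-- For every rooted plane tree `T`, `TPC(T)` never contains two consecutive
occurrences of the symbol ↓, and `TPC(T)` does not begin with ↓. -/
theorem tpc_no_consecutive_downs (T : PTree) :
    ¬ ([PCSym.down, PCSym.down] <:+: TPC T) ∧
    (TPC T).head? ≠ some PCSym.down := by
  have hc := tpc_chain T
  constructor
  · intro h
    have h' : [PCSym.down, PCSym.down] <:+: (PCSym.down :: TPC T) :=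
      h.trans (List.suffix_cons _ _).isInfix
    have := hc.infix h'
    simp [List.Chain', List.isChain_cons_cons, RNoDD] at this
  · intro h
    cases hT : TPC T with
    | nil => simp [hT] at h
    | cons a l =>
      rw [hT] at h hc
      simp at h
      subst h
      rw [List.Chain', List.isChain_cons_cons] at hc
      rcases hc.1 with h2 | h2 <;> simp at h2
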